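/- Let H₁, H₂ be complex Hilbert spaces, X : H₁ → H₂ an invertible bounded operator with polar decomposition X = U S where S = (X*X)^{1/2} is positive invertible and U is unitary. Suppose σ₁ : A → B(H₁) and σ₂ : A → B(H₂) are maps from a set A such that σ₂(p) X = X σ₁(p) for all p ∈ A. If for every p ∈ A the commutator [X*X, σ₁(p)] is compact, then for every p ∈ A the operator σ₂(p) - U σ₁(p) U* is compact; in particular, if every σ₁(p) is essentially normal then every σ₂(p) is essentially normal. -/

import Mathlib

open ContinuousLinearMap Metric


section Aux

variable {E F G : Type*}
  [NormedAddCommGroup E] [InnerProductSpace ℂ E] [CompleteSpace E]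
  [NormedAddCommGroup F] [InnerProductSpace ℂ F] [CompleteSpace F]
  [NormedAddCommGroup G] [InnerProductSpace ℂ G] [CompleteSpace G]

lemma cptL {k : E →L[ℂ] F} (hk : IsCompactOperator ⇑k) (b : F →L[ℂ] G) :
    IsCompactOperator ⇑(b ∘L k) := by
  simpa [ContinuousLinearMap.coe_comp] using hk.clm_comp b

lemma cptR {k : E →L[ℂ] F} (hk : IsCompactOperator ⇑k) (c : G →L[ℂ] E) :
    IsCompactOperator ⇑(k ∘L c) := by
  simpa [ContinuousLinearMap.coe_comp] using hk.comp_clm c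

lemma cptConj {k : E →L[ℂ] E} (hk : IsCompactOperator ⇑k) (b : E →L[ℂ] F) (c : G →L[ℂ] E) :
    IsCompactOperator ⇑(b ∘L k ∘L c) := cptL (cptR hk c) b

lemma cptAdd {x y : E →L[ℂ] F} (hx : IsCompactOperator ⇑x) (hy : IsCompactOperator ⇑y) :
    IsCompactOperator ⇑(x + y) := by
  have h : ⇑(x + y) = ⇑x + ⇑y := by ext z; simp
  rw [h]; exact hx.add hy

lemma cptSub {x y : E →L[ℂ] F} (hx : IsCompactOperator ⇑x) (hy : IsCompactOperator ⇑y) :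
    IsCompactOperator ⇑(x - y) := by
  have h : ⇑(x - y) = ⇑x - ⇑y := by ext z; simp
  rw [h]; exact hx.sub hy

lemma cptAdjoint {T : E →L[ℂ] F} (hT : IsCompactOperator ⇑T) :
    IsCompactOperator ⇑(ContinuousLinearMap.adjoint T) := by
  classical
  set T' := ContinuousLinearMap.adjoint T with hT'def
  have hTT : IsCompactOperator ⇑(T ∘L T') := cptR hT T'
  have main : IsCompact (closure ((T' : F →ₗ[ℂ] E) '' closedBall 0 1)) := by
    apply TotallyBounded.isCompact_of_isClosed _ isClosed_closure
    apply TotallyBounded.closure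
    rw [Metric.totallyBounded_iff]
    intro ε hε
    set δ : ℝ := ε ^ 2 / 9 with hδdef
    have hδ0 : 0 < δ := by positivity
    have hK : IsCompact (closure (((T ∘L T') : F →ₗ[ℂ] F) '' closedBall 0 1)) :=
      IsCompactOperator.isCompact_closure_image_closedBall (𝕜₁ := ℂ)
        (f := ((T ∘L T') : F →ₗ[ℂ] F)) hTT 1
    obtain ⟨t, ht, hcov⟩ := Metric.totallyBounded_iff.mp hK.totallyBounded δ hδ0
    set pick : F → E := fun c =>
      if h : ∃ x, x ∈ closedBall (0 : F) 1 ∧ (T ∘L T') x ∈ ball c δ then T' h.choose else 0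
      with hpickdef
    refine ⟨pick '' t, ht.image _, ?_⟩
    rintro _ ⟨y, hy, rfl⟩
    have hyK : (T ∘L T') y ∈ ⋃ c ∈ t, ball c δ :=
      hcov (subset_closure ⟨y, hy, rfl⟩)
    obtain ⟨c, hct, hyc⟩ := Set.mem_iUnion₂.mp hyK
    have hex : ∃ x, x ∈ closedBall (0 : F) 1 ∧ (T ∘L T') x ∈ ball c δ := ⟨y, hy, hyc⟩
    obtain ⟨hx1, hx2⟩ := hex.choose_spec
    set x := hex.choose with hxdef
    have hpc : pick c = T' x := by rw [hpickdef]; simp only; rw [dif_pos hex]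
    refine Set.mem_iUnion₂.mpr ⟨pick c, ⟨c, hct, rfl⟩, ?_⟩
    rw [hpc, mem_ball, dist_eq_norm]
    have h1 : ‖(T ∘L T') (y - x)‖ < 2 * δ := by
      have ha := mem_ball.mp hyc
      have hb := mem_ball.mp hx2
      have := dist_triangle ((T ∘L T') y) c ((T ∘L T') x)
      rw [dist_comm c ((T ∘L T') x)] at this
      rw [map_sub, ← dist_eq_norm]
      linarith
    have key : ‖T' (y - x)‖ ^ 2 ≤ ‖y - x‖ * ‖(T ∘L T') (y - x)‖ := by
      have e1 : (‖T' (y - x)‖ : ℝ) ^ 2 = RCLike.re (inner ℂ (T' (y - x)) (T' (y - x)) : ℂ) :=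
        (inner_self_eq_norm_sq _).symm
      have e2 : (inner ℂ (T' (y - x)) (T' (y - x)) : ℂ)
          = inner ℂ (y - x) ((T ∘L T') (y - x)) := by
        rw [hT'def]
        exact ContinuousLinearMap.adjoint_inner_left T _ _
      rw [e1, e2]
      calc RCLike.re (inner ℂ (y - x) ((T ∘L T') (y - x)) : ℂ)
          ≤ ‖(inner ℂ (y - x) ((T ∘L T') (y - x)) : ℂ)‖ := RCLike.re_le_norm _
        _ ≤ ‖y - x‖ * ‖(T ∘L T') (y - x)‖ := norm_inner_le_norm _ _
    have hxy : ‖y - x‖ ≤ 2 := by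
      have h3 : ‖y‖ ≤ 1 := mem_closedBall_zero_iff.mp hy
      have h4 : ‖x‖ ≤ 1 := mem_closedBall_zero_iff.mp hx1
      calc ‖y - x‖ ≤ ‖y‖ + ‖x‖ := norm_sub_le _ _
        _ ≤ 2 := by linarith
    have hfin : ‖T' y - T' x‖ ^ 2 < ε ^ 2 := by
      rw [← map_sub]
      have h5 : ‖y - x‖ * ‖(T ∘L T') (y - x)‖ ≤ 2 * (2 * δ) :=
        mul_le_mul hxy h1.le (norm_nonneg _) (by norm_num)
      have : ‖T' (y - x)‖ ^ 2 ≤ 4 * δ := by linarith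
      have hδε : 4 * δ < ε ^ 2 := by rw [hδdef]; nlinarith
      linarith
    exact lt_of_pow_lt_pow_left₀ 2 hε.le hfin
  exact (isCompactOperator_iff_isCompact_closure_image_closedBall
    (𝕜₁ := ℂ) (T' : F →ₗ[ℂ] E) zero_lt_one).mpr main

end Aux


set_option maxHeartbeats 800000 in
lemma cptCfcComm {E : Type*} [NormedAddCommGroup E] [InnerProductSpace ℂ E] [CompleteSpace E]
    {a T : E →L[ℂ] E} (ha : IsSelfAdjoint a)
    (hc : IsCompactOperator ⇑(a * T - T * a)) {f : ℝ → ℝ} (hf : Continuous f) :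
    IsCompactOperator ⇑(cfc f a * T - T * cfc f a) := by
  obtain hE | hE := subsingleton_or_nontrivial E
  · exact ⟨Set.univ, Set.finite_univ.isCompact, by simp⟩
  have cptL' : ∀ {k : E →L[ℂ] E} (_ : IsCompactOperator ⇑k) (b : E →L[ℂ] E),
      IsCompactOperator ⇑(b * k) := fun hk b => by
    simpa [ContinuousLinearMap.coe_comp] using hk.clm_comp b
  have cptR' : ∀ {k : E →L[ℂ] E} (_ : IsCompactOperator ⇑k) (c : E →L[ℂ] E),
      IsCompactOperator ⇑(k * c) := fun hk c => by
    simpa [ContinuousLinearMap.coe_comp] using hk.comp_clm c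
  have hpoly : ∀ q : Polynomial ℝ,
      IsCompactOperator ⇑((Polynomial.aeval a) q * T - T * (Polynomial.aeval a) q) := by
    intro q
    induction q using Polynomial.induction_on with
    | C c =>
      have h0 : (Polynomial.aeval a) (Polynomial.C c) * T
          - T * (Polynomial.aeval a) (Polynomial.C c) = 0 := by
        simp [Polynomial.aeval_C, Algebra.algebraMap_eq_smul_one, smul_mul_assoc,
          mul_smul_comm, one_mul, mul_one]
      rw [h0]
      refine ⟨{0}, isCompact_singleton, ?_⟩
      have hpre : (⇑(0 : E →L[ℂ] E)) ⁻¹' {0} = Set.univ := by ext z; simp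
      rw [hpre]; exact Filter.univ_mem
    | add p q hp hq =>
      have h0 : (Polynomial.aeval a) (p + q) * T - T * (Polynomial.aeval a) (p + q)
          = ((Polynomial.aeval a) p * T - T * (Polynomial.aeval a) p)
            + ((Polynomial.aeval a) q * T - T * (Polynomial.aeval a) q) := by
        rw [map_add]; noncomm_ring
      rw [h0]
      have hcoe : ⇑(((Polynomial.aeval a) p * T - T * (Polynomial.aeval a) p)
            + ((Polynomial.aeval a) q * T - T * (Polynomial.aeval a) q))
          = ⇑((Polynomial.aeval a) p * T - T * (Polynomial.aeval a) p)
            + ⇑((Polynomial.aeval a) q * T - T * (Polynomial.aeval a) q) := by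
        ext z; simp
      rw [hcoe]; exact hp.add hq
    | monomial n c ih =>
      have hmono : (Polynomial.aeval a) (Polynomial.C c * Polynomial.X ^ (n + 1))
          = (Polynomial.aeval a) (Polynomial.C c * Polynomial.X ^ n) * a := by
        simp [map_mul, map_pow, Polynomial.aeval_X, Polynomial.aeval_C, pow_succ, mul_assoc]
      set P := (Polynomial.aeval a) (Polynomial.C c * Polynomial.X ^ n) with hP
      have h0 : P * a * T - T * (P * a)
          = P * (a * T - T * a) + (P * T - T * P) * a := by noncomm_ring
      rw [hmono, h0]
      have hcoe : ⇑(P * (a * T - T * a) + (P * T - T * P) * a)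
          = ⇑(P * (a * T - T * a)) + ⇑((P * T - T * P) * a) := by ext z; simp
      rw [hcoe]
      exact (cptL' hc P).add (cptR' ih a)
  have hspec : spectrum ℝ a ⊆ Set.Icc (-‖a‖) ‖a‖ := by
    intro x hx
    have h1 := spectrum.norm_le_norm_of_mem hx
    rw [Real.norm_eq_abs] at h1
    exact abs_le.mp h1
  have hchoice : ∀ n : ℕ, ∃ q : Polynomial ℝ,
      ∀ x ∈ Set.Icc (-‖a‖) ‖a‖, |q.eval x - f x| < 1 / (n + 1) :=
    fun n => exists_polynomial_near_of_continuousOn _ _ f hf.continuousOn _ (by positivity)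
  choose q hq using hchoice
  have hbound : ∀ n : ℕ, ‖(Polynomial.aeval a) (q n) - cfc f a‖ ≤ 1 / (n + 1) := by
    intro n
    rw [← cfc_polynomial (q n) a ha]
    rw [← cfc_sub (fun x => (q n).eval x) f a (by fun_prop) (by fun_prop)]
    apply norm_cfc_le (by positivity)
    intro x hx
    rw [Real.norm_eq_abs]
    exact (hq n x (hspec hx)).le
  have htend : Filter.Tendsto (fun n => ((Polynomial.aeval a) (q n) : E →L[ℂ] E))
      Filter.atTop (nhds (cfc f a)) := by
    rw [← tendsto_sub_nhds_zero_iff]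
    exact squeeze_zero_norm hbound tendsto_one_div_add_atTop_nhds_zero_nat
  have htend2 : Filter.Tendsto
      (fun n => ((Polynomial.aeval a) (q n) : E →L[ℂ] E) * T - T * (Polynomial.aeval a) (q n))
      Filter.atTop (nhds (cfc f a * T - T * cfc f a)) :=
    (htend.mul tendsto_const_nhds).sub (tendsto_const_nhds.mul htend)
  exact isCompactOperator_of_tendsto htend2 (Filter.Eventually.of_forall fun n => hpoly (q n))

lemma cfcSqrtEq {E : Type*} [NormedAddCommGroup E] [InnerProductSpace ℂ E] [CompleteSpace E]
    (a S : E →L[ℂ] E) (hS : 0 ≤ S) (hSa : IsSelfAdjoint S) (h : S * S = a) :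
    cfc Real.sqrt a = S := by
  have h1 : a = cfc (fun x : ℝ => x * x) S := by
    rw [cfc_mul _ _ S (by fun_prop) (by fun_prop)]
    rw [cfc_id' ℝ S, ← h]
  rw [h1, ← cfc_comp' Real.sqrt (fun x : ℝ => x * x) S (by fun_prop) (by fun_prop)]
  calc cfc (fun x : ℝ => Real.sqrt (x * x)) S = cfc (fun x : ℝ => x) S := by
        apply cfc_congr
        intro x hx
        have hx0 : 0 ≤ x := spectrum_nonneg_of_nonneg hS hx
        simp [Real.sqrt_mul_self hx0]
    _ = S := cfc_id' ℝ S


set_option maxHeartbeats 2000000 in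
theorem stmt3 {H₁ H₂ : Type*}
    [NormedAddCommGroup H₁] [InnerProductSpace ℂ H₁] [CompleteSpace H₁]
    [NormedAddCommGroup H₂] [InnerProductSpace ℂ H₂] [CompleteSpace H₂]
    {A : Type*} (σ₁ : A → (H₁ →L[ℂ] H₁)) (σ₂ : A → (H₂ →L[ℂ] H₂))
    (X : H₁ →L[ℂ] H₂) (Xinv : H₂ →L[ℂ] H₁)
    (hXinv : X ∘L Xinv = 1 ∧ Xinv ∘L X = 1)
    (S : H₁ →L[ℂ] H₁) (U : H₁ →L[ℂ] H₂)
    (hpolar : X = U ∘L S)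
    (hS_sa : ContinuousLinearMap.adjoint S = S)
    (hS_pos : ∀ x : H₁, 0 ≤ (inner ℂ (S x) x : ℂ).re ∧ (inner ℂ (S x) x : ℂ).im = 0)
    (hS_sq : S ∘L S = ContinuousLinearMap.adjoint X ∘L X)
    (hS_inv : ∃ Sinv : H₁ →L[ℂ] H₁, S ∘L Sinv = 1 ∧ Sinv ∘L S = 1)
    (hU : ContinuousLinearMap.adjoint U ∘L U = 1 ∧ U ∘L ContinuousLinearMap.adjoint U = 1)
    (hintertwine : ∀ p : A, σ₂ p ∘L X = X ∘L σ₁ p)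
    (hcompact : ∀ p : A,
      IsCompactOperator
        ⇑(((ContinuousLinearMap.adjoint X ∘L X) ∘L σ₁ p
          - σ₁ p ∘L (ContinuousLinearMap.adjoint X ∘L X) : H₁ →L[ℂ] H₁))) :
    (∀ p : A,
      IsCompactOperator
        ⇑((σ₂ p - U ∘L σ₁ p ∘L ContinuousLinearMap.adjoint U : H₂ →L[ℂ] H₂))) ∧
    ((∀ p : A, IsCompactOperator
        ⇑((σ₁ p ∘L ContinuousLinearMap.adjoint (σ₁ p)
          - ContinuousLinearMap.adjoint (σ₁ p) ∘L σ₁ p : H₁ →L[ℂ] H₁))) →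
      ∀ p : A, IsCompactOperator
        ⇑((σ₂ p ∘L ContinuousLinearMap.adjoint (σ₂ p)
          - ContinuousLinearMap.adjoint (σ₂ p) ∘L σ₂ p : H₂ →L[ℂ] H₂))) := by
  obtain ⟨Sinv, hSi1, hSi2⟩ := hS_inv
  have hU1 : ∀ x, ContinuousLinearMap.adjoint U (U x) = x := fun x => by
    have := ContinuousLinearMap.ext_iff.mp hU.1 x
    simpa using this
  have hU2 : ∀ x, U (ContinuousLinearMap.adjoint U x) = x := fun x => by
    have := ContinuousLinearMap.ext_iff.mp hU.2 x
    simpa using this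
  have hSi1' : ∀ x, S (Sinv x) = x := fun x => by
    have := ContinuousLinearMap.ext_iff.mp hSi1 x
    simpa using this
  set a : H₁ →L[ℂ] H₁ := ContinuousLinearMap.adjoint X ∘L X with ha_def
  have haSA : IsSelfAdjoint a := by
    rw [ContinuousLinearMap.isSelfAdjoint_iff']
    rw [ha_def, ContinuousLinearMap.adjoint_comp, ContinuousLinearMap.adjoint_adjoint]
  have hSsa : IsSelfAdjoint S := ContinuousLinearMap.isSelfAdjoint_iff'.mpr hS_sa
  have hS0 : 0 ≤ S := by
    rw [ContinuousLinearMap.nonneg_iff_isPositive]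
    exact ⟨hSsa.isSymmetric, fun x => by simpa [ContinuousLinearMap.reApplyInnerSelf] using (hS_pos x).1⟩
  have hSS : S * S = a := hS_sq
  have hScfc : cfc Real.sqrt a = S := cfcSqrtEq a S hS0 hSsa hSS
  have hK : ∀ p : A, IsCompactOperator ⇑(S * σ₁ p - σ₁ p * S) := by
    intro p
    have h := cptCfcComm haSA
      (show IsCompactOperator ⇑(a * σ₁ p - σ₁ p * a) from hcompact p) Real.continuous_sqrt
    rwa [hScfc] at h
  set W : H₂ →L[ℂ] H₁ := Sinv ∘L ContinuousLinearMap.adjoint U with hW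
  have hXW : X ∘L W = 1 := by
    rw [hpolar]
    ext x
    simp [hW, hSi1', hU2]
  have hkey : ∀ p : A, σ₂ p - U ∘L σ₁ p ∘L ContinuousLinearMap.adjoint U
      = U ∘L (S * σ₁ p - σ₁ p * S) ∘L W := by
    intro p
    have hσ : σ₂ p = X ∘L σ₁ p ∘L W := by
      calc σ₂ p = σ₂ p ∘L (X ∘L W) := by rw [hXW]; ext x; simp
        _ = (σ₂ p ∘L X) ∘L W := by rw [ContinuousLinearMap.comp_assoc]
        _ = X ∘L σ₁ p ∘L W := by rw [hintertwine p, ContinuousLinearMap.comp_assoc]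
    rw [hσ, hpolar]
    ext x
    simp [hW, hSi1', ContinuousLinearMap.mul_def]
  constructor
  · intro p
    rw [hkey p]
    exact cptConj (hK p) U W
  · intro h1 p
    set B : H₂ →L[ℂ] H₂ := U ∘L σ₁ p ∘L ContinuousLinearMap.adjoint U with hB
    have hDc : IsCompactOperator ⇑(σ₂ p - B) := by
      rw [hB, hkey p]; exact cptConj (hK p) U W
    set D : H₂ →L[ℂ] H₂ := σ₂ p - B with hDdef
    have hσ₂ : σ₂ p = B + D := by rw [hDdef]; abel
    have hD'c : IsCompactOperator ⇑(ContinuousLinearMap.adjoint D) := cptAdjoint hDc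
    have hstarB : ContinuousLinearMap.adjoint B
        = U ∘L ContinuousLinearMap.adjoint (σ₁ p) ∘L ContinuousLinearMap.adjoint U := by
      rw [hB, ContinuousLinearMap.adjoint_comp, ContinuousLinearMap.adjoint_comp,
        ContinuousLinearMap.adjoint_adjoint, ContinuousLinearMap.comp_assoc]
    have hBB : B * ContinuousLinearMap.adjoint B - ContinuousLinearMap.adjoint B * B
        = U ∘L (σ₁ p ∘L ContinuousLinearMap.adjoint (σ₁ p)
            - ContinuousLinearMap.adjoint (σ₁ p) ∘L σ₁ p) ∘L ContinuousLinearMap.adjoint U := by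
      rw [hstarB, hB]
      ext x
      simp [ContinuousLinearMap.mul_def, hU1]
    have hexp : σ₂ p ∘L ContinuousLinearMap.adjoint (σ₂ p)
          - ContinuousLinearMap.adjoint (σ₂ p) ∘L σ₂ p
        = (B * ContinuousLinearMap.adjoint B - ContinuousLinearMap.adjoint B * B)
          + ((B * ContinuousLinearMap.adjoint D
              + (D * ContinuousLinearMap.adjoint B + D * ContinuousLinearMap.adjoint D))
            - (ContinuousLinearMap.adjoint B * D
              + (ContinuousLinearMap.adjoint D * B + ContinuousLinearMap.adjoint D * D))) := by
      have hadj : ContinuousLinearMap.adjoint (σ₂ p)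
          = ContinuousLinearMap.adjoint B + ContinuousLinearMap.adjoint D := by
        rw [hσ₂, map_add]
      show σ₂ p * ContinuousLinearMap.adjoint (σ₂ p)
          - ContinuousLinearMap.adjoint (σ₂ p) * σ₂ p = _
      rw [hadj, hσ₂]
      noncomm_ring
    rw [hexp]
    refine cptAdd ?_ (cptSub (cptAdd ?_ (cptAdd ?_ ?_)) (cptAdd ?_ (cptAdd ?_ ?_)))
    · rw [hBB]; exact cptConj (h1 p) U (ContinuousLinearMap.adjoint U)
    · exact cptL hD'c B
    · exact cptR hDc (ContinuousLinearMap.adjoint B)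
    · exact cptR hDc (ContinuousLinearMap.adjoint D)
    · exact cptL hDc (ContinuousLinearMap.adjoint B)
    · exact cptR hD'c B
    · exact cptL hDc (ContinuousLinearMap.adjoint D)
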